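/- Let H be a complex Hilbert space, let A and L be bounded linear operators on H, and let θ, φ be real numbers. Define the operator 𝒜 on H × H by 𝒜(u,v) = (A u + (cos θ)·L u + e^{iφ}(sin θ)·L v , e^{-iφ}(sin θ)·L u + A v − (cos θ)·L v), and define 𝒰 on H × H by 𝒰(u,v) = (cos(θ/2)·u − e^{iφ} sin(θ/2)·v , e^{-iφ} sin(θ/2)·u + cos(θ/2)·v). Then 𝒰 is a unitary operator on H × H (i.e. a surjective linear isometry for the Hilbert-space norm ‖(u,v)‖² = ‖u‖² + ‖v‖²), and 𝒜 ∘ 𝒰 = 𝒰 ∘ 𝒜̃, where 𝒜̃(u,v) = ((A+L)u , (A−L)v). -/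

import Mathlib

/-- Decoupling identity 𝒜𝒰 = 𝒰𝒜̃ for the coupled two-graph operator, and
unitarity of 𝒰 (surjective linear isometry for the Hilbert norm
‖(u,v)‖² = ‖u‖² + ‖v‖² on H × H). -/
theorem coupled_operator_decoupling
    {H : Type*} [NormedAddCommGroup H] [InnerProductSpace ℂ H] [CompleteSpace H]
    (A L : H →L[ℂ] H) (θ φ : ℝ)
    (𝒜 𝒰 𝒜' : (H × H) →L[ℂ] (H × H))
    (h𝒜 : ∀ u v : H, 𝒜 (u, v) =
      (A u + (Real.cos θ : ℂ) • L u
          + (Complex.exp ((φ : ℂ) * Complex.I) * (Real.sin θ : ℂ)) • L v,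
       (Complex.exp (-(φ : ℂ) * Complex.I) * (Real.sin θ : ℂ)) • L u
          + A v - (Real.cos θ : ℂ) • L v))
    (h𝒰 : ∀ u v : H, 𝒰 (u, v) =
      ((Real.cos (θ / 2) : ℂ) • u
          - (Complex.exp ((φ : ℂ) * Complex.I) * (Real.sin (θ / 2) : ℂ)) • v,
       (Complex.exp (-(φ : ℂ) * Complex.I) * (Real.sin (θ / 2) : ℂ)) • u
          + (Real.cos (θ / 2) : ℂ) • v))
    (h𝒜' : ∀ u v : H, 𝒜' (u, v) = ((A + L) u, (A - L) v)) :
    (∀ u v : H, ‖(𝒰 (u, v)).1‖ ^ 2 + ‖(𝒰 (u, v)).2‖ ^ 2 = ‖u‖ ^ 2 + ‖v‖ ^ 2)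
    ∧ Function.Surjective 𝒰
    ∧ ∀ p : H × H, 𝒜 (𝒰 p) = 𝒰 (𝒜' p) := by
  have hE : Complex.exp ((φ : ℂ) * Complex.I) * Complex.exp (-(φ : ℂ) * Complex.I) = 1 := by
    rw [← Complex.exp_add]; ring_nf; exact Complex.exp_zero
  have hE2 : Complex.exp ((φ : ℂ) * Complex.I) * Complex.exp (-((φ : ℂ) * Complex.I)) = 1 := by
    rw [← Complex.exp_add]; ring_nf; exact Complex.exp_zero
  have ha : Complex.cos ((θ : ℂ) / 2) ^ 2 + Complex.sin ((θ : ℂ) / 2) ^ 2 = 1 :=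
    Complex.cos_sq_add_sin_sq _
  have hcC : (Real.cos θ : ℂ)
      = Complex.cos ((θ : ℂ) / 2) ^ 2 - Complex.sin ((θ : ℂ) / 2) ^ 2 := by
    have hr : Real.cos θ = Real.cos (θ / 2) ^ 2 - Real.sin (θ / 2) ^ 2 := by
      have h := Real.cos_two_mul (θ / 2)
      rw [show 2 * (θ / 2) = θ by ring] at h
      have h1 := Real.sin_sq_add_cos_sq (θ / 2)
      linarith
    rw [hr]; push_cast; ring
  have hSC : (Real.sin θ : ℂ)
      = 2 * Complex.sin ((θ : ℂ) / 2) * Complex.cos ((θ : ℂ) / 2) := by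
    have hr := Real.sin_two_mul (θ / 2)
    rw [show 2 * (θ / 2) = θ by ring] at hr
    rw [hr]; push_cast; ring
  have hconjE' : (starRingEnd ℂ) (Complex.exp (-(φ : ℂ) * Complex.I))
      = Complex.exp ((φ : ℂ) * Complex.I) := by
    rw [← Complex.exp_conj, map_mul, map_neg, Complex.conj_I, Complex.conj_ofReal]; ring_nf
  have hnormE : ‖Complex.exp ((φ : ℂ) * Complex.I)‖ = 1 := by
    simpa using Complex.norm_exp_ofReal_mul_I φ
  have hnormE' : ‖Complex.exp (-(φ : ℂ) * Complex.I)‖ = 1 := by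
    have : (-(φ : ℂ)) = ((-φ : ℝ) : ℂ) := by push_cast; ring
    rw [this]; simpa using Complex.norm_exp_ofReal_mul_I (-φ)
  refine ⟨?_, ?_, ?_⟩
  · intro u v
    rw [h𝒰]
    simp only
    rw [norm_sub_sq (𝕜 := ℂ), norm_add_sq (𝕜 := ℂ), inner_smul_left, inner_smul_right,
      inner_smul_left, inner_smul_right]
    have hcross : (starRingEnd ℂ) ((Real.cos (θ / 2) : ℂ))
          * ((Complex.exp ((φ : ℂ) * Complex.I) * (Real.sin (θ / 2) : ℂ))
            * (inner ℂ u v : ℂ))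
        = (starRingEnd ℂ) (Complex.exp (-(φ : ℂ) * Complex.I) * (Real.sin (θ / 2) : ℂ))
          * ((Real.cos (θ / 2) : ℂ) * (inner ℂ u v : ℂ)) := by
      rw [Complex.conj_ofReal, map_mul, hconjE', Complex.conj_ofReal]; ring
    rw [hcross]
    simp only [norm_smul, norm_mul, hnormE, hnormE', Complex.norm_real, one_mul]
    have h1 := Real.sin_sq_add_cos_sq (θ / 2)
    have h2 : ‖Real.cos (θ / 2)‖ ^ 2 = Real.cos (θ / 2) ^ 2 := sq_abs _
    have h3 : ‖Real.sin (θ / 2)‖ ^ 2 = Real.sin (θ / 2) ^ 2 := sq_abs _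
    nlinarith [sq_nonneg ‖u‖, sq_nonneg ‖v‖]
  · rintro ⟨x, y⟩
    refine ⟨((Real.cos (θ / 2) : ℂ) • x
        + (Complex.exp ((φ : ℂ) * Complex.I) * (Real.sin (θ / 2) : ℂ)) • y,
        -((Complex.exp (-(φ : ℂ) * Complex.I) * (Real.sin (θ / 2) : ℂ)) • x)
        + (Real.cos (θ / 2) : ℂ) • y), ?_⟩
    rw [h𝒰]
    refine Prod.ext ?_ ?_ <;> simp only <;> match_scalars <;>
      first
        | ring1
        | linear_combination Complex.sin ((θ : ℂ) / 2) ^ 2 * hE + ha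
  · rintro ⟨u, v⟩
    rw [h𝒰, h𝒜, h𝒜', h𝒰]
    rw [hcC, hSC]
    refine Prod.ext ?_ ?_ <;>
      simp only [map_add, map_sub, map_smul, ContinuousLinearMap.add_apply,
        ContinuousLinearMap.sub_apply] <;>
      match_scalars <;>
      first
        | ring1
        | linear_combination Complex.sin ((θ : ℂ) / 2) ^ 2 * hE + ha
        | linear_combination Complex.exp ((φ : ℂ) * Complex.I) * Complex.sin ((θ : ℂ) / 2) * ha
        | linear_combination Complex.exp (-(φ : ℂ) * Complex.I) * Complex.sin ((θ : ℂ) / 2) * ha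
        | linear_combination 2 * Complex.cos ((θ : ℂ) / 2) * Complex.sin ((θ : ℂ) / 2) ^ 2 * hE
            + Complex.cos ((θ : ℂ) / 2) * ha
        | linear_combination (-2) * Complex.cos ((θ : ℂ) / 2) * Complex.sin ((θ : ℂ) / 2) ^ 2 * hE
            - Complex.cos ((θ : ℂ) / 2) * ha
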